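/- In one space dimension, the numerical flux G*(ρ_K, u_K; ρ_L, u_L) = (⟨ρ⟩_γ ū, p̄/ε² + ⟨ρ⟩_γ ū²), where ū = (u_K + u_L)/2, p̄ = (κρ_K^γ + κρ_L^γ)/2, and ⟨ρ⟩_γ = ((γ−1)/γ)(ρ_L^γ − ρ_K^γ)/(ρ_L^{γ−1} − ρ_K^{γ−1}), satisfies the Tadmor entropy conservation condition: ⟦V·G⟧ − ⟦V⟧·G* = ⟦ω⟧, where ⟦a⟧ = a_L − a_K denotes the jump, V = (−u²/2 + (κγ/(ε²(γ−1)))ρ^{γ−1}, u) is the entropy variable, G(ρ,u) = (ρu, κρ^γ/ε² + ρu²) is the exact flux, and ω(ρ,u) = u(ρu²/2 + κρ^γ/(ε²(γ−1)) + κρ^γ/ε²) is the entropy flux. -/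
import Mathlib


open Real

theorem tadmor_entropy_conservation (κ γ ε : ℝ) (hκ : 0 < κ) (hγ : 1 < γ) (hε : ε ≠ 0)
    (ρK ρL uK uL : ℝ) (hK : 0 < ρK) (hL : 0 < ρL) (hne : ρK ≠ ρL)
    (V1 V2 G1 G2 W : ℝ → ℝ → ℝ)
    (hV1 : ∀ ρ u, V1 ρ u = -u ^ 2 / 2 + (κ * γ / (ε ^ 2 * (γ - 1))) * ρ ^ (γ - 1))
    (hV2 : ∀ ρ u, V2 ρ u = u)
    (hG1 : ∀ ρ u, G1 ρ u = ρ * u)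
    (hG2 : ∀ ρ u, G2 ρ u = κ * ρ ^ γ / ε ^ 2 + ρ * u ^ 2)
    (hW : ∀ ρ u, W ρ u = u * (ρ * u ^ 2 / 2 + κ * ρ ^ γ / (ε ^ 2 * (γ - 1)) + κ * ρ ^ γ / ε ^ 2)) :
    (V1 ρL uL * G1 ρL uL + V2 ρL uL * G2 ρL uL)
      - (V1 ρK uK * G1 ρK uK + V2 ρK uK * G2 ρK uK)
      - ((V1 ρL uL - V1 ρK uK) *
          (((γ - 1) / γ) * (ρL ^ γ - ρK ^ γ) / (ρL ^ (γ - 1) - ρK ^ (γ - 1)) * ((uK + uL) / 2))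
        + (V2 ρL uL - V2 ρK uK) *
          (((κ * ρK ^ γ + κ * ρL ^ γ) / 2) / ε ^ 2
            + ((γ - 1) / γ) * (ρL ^ γ - ρK ^ γ) / (ρL ^ (γ - 1) - ρK ^ (γ - 1))
              * ((uK + uL) / 2) ^ 2))
      = W ρL uL - W ρK uK := by
  simp only [hV1, hV2, hG1, hG2, hW]
  have hγ0 : (0:ℝ) < γ - 1 := by linarith
  have hbK : ρK ^ γ = ρK ^ (γ - 1) * ρK := by
    nth_rewrite 1 [show γ = (γ - 1) + 1 by ring]
    rw [Real.rpow_add hK, Real.rpow_one]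
  have hbL : ρL ^ γ = ρL ^ (γ - 1) * ρL := by
    nth_rewrite 1 [show γ = (γ - 1) + 1 by ring]
    rw [Real.rpow_add hL, Real.rpow_one]
  have hd : ρL ^ (γ - 1) - ρK ^ (γ - 1) ≠ 0 := by
    intro h
    have := Real.rpow_left_injOn (x := γ - 1) (ne_of_gt hγ0)
    have : ρL = ρK := this hL.le hK.le
      (by linarith [sub_eq_zero.mp h])
    exact hne this.symm
  set aK := ρK ^ (γ - 1) with haK
  set aL := ρL ^ (γ - 1) with haL
  rw [hbK, hbL]
  have hε2 : ε ^ 2 ≠ 0 := pow_ne_zero 2 hε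
  have hγne : γ ≠ 0 := by linarith
  have hγ1 : γ - 1 ≠ 0 := ne_of_gt hγ0
  field_simp
  ring
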